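/- For all integers n ≥ 1, 3·F_{2n−1} = L_{4n−2} − 4·∑_{k=1}^{n−1} F_{2k}·L_{4n−4k−2}, where F and L are the Fibonacci and Lucas numbers. -/
import Mathlib

def lucas : ℕ → ℕ
  | 0 => 2
  | 1 => 1
  | n + 2 => lucas (n + 1) + lucas n

lemma lucas8 (q : ℕ) : (lucas (q+8) : ℤ) = 7 * lucas (q+4) - lucas q := by
  have h : lucas (q+8) + lucas q = 7 * lucas (q+4) := by
    simp [lucas, show q+8=(q+6)+2 from rfl, show q+7=(q+5)+2 from rfl,
      show q+6=(q+4)+2 from rfl, show q+5=(q+3)+2 from rfl,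
      show q+4=(q+2)+2 from rfl, show q+3=(q+1)+2 from rfl]
    ring
  have h2 : (lucas (q+8) : ℤ) + lucas q = 7 * lucas (q+4) := by exact_mod_cast h
  linarith

def S (m : ℕ) : ℤ := ∑ k ∈ Finset.Icc 1 m, (Nat.fib (2*k) : ℤ) * lucas (4*(m-k)+2)

lemma Sstep (m : ℕ) : S (m+2) = 7 * S (m+1) - S m + 3 * Nat.fib (2*m+3) := by
  have l2 : lucas 2 = 3 := rfl
  have l6 : lucas 6 = 18 := rfl
  have hA : S (m+1) = (∑ k ∈ Finset.Icc 1 m,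
      (Nat.fib (2*k) : ℤ) * lucas ((4*(m-k)+2)+4)) + (Nat.fib (2*m+2) : ℤ) * 3 := by
    have e1 : 4*(m+1-(m+1))+2 = 2 := by omega
    have e2 : 2*(m+1) = 2*m+2 := by ring
    rw [S, Finset.sum_Icc_succ_top (by omega), e1, e2, l2]
    congr 1
    · apply Finset.sum_congr rfl
      intro k hk
      simp only [Finset.mem_Icc] at hk
      have e : 4*(m+1-k)+2 = 4*(m-k)+2+4 := by omega
      rw [e]
  have hB : S (m+2) = (∑ k ∈ Finset.Icc 1 m,
      (Nat.fib (2*k) : ℤ) * lucas ((4*(m-k)+2)+8))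
      + (Nat.fib (2*m+2) : ℤ) * 18 + (Nat.fib (2*m+4) : ℤ) * 3 := by
    have e1 : 4*(m+2-(m+1))+2 = 6 := by omega
    have e2 : 2*(m+1) = 2*m+2 := by ring
    have e3 : 4*(m+2-(m+2))+2 = 2 := by omega
    have e4 : 2*(m+2) = 2*m+4 := by ring
    rw [S, Finset.sum_Icc_succ_top (by omega), Finset.sum_Icc_succ_top (by omega),
      e1, e2, e3, e4, l2, l6]
    congr 2
    · apply Finset.sum_congr rfl
      intro k hk
      simp only [Finset.mem_Icc] at hk
      have e : 4*(m+2-k)+2 = 4*(m-k)+2+8 := by omega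
      rw [e]
  have hC : (∑ k ∈ Finset.Icc 1 m, (Nat.fib (2*k) : ℤ) * lucas ((4*(m-k)+2)+8))
      = 7 * (∑ k ∈ Finset.Icc 1 m, (Nat.fib (2*k) : ℤ) * lucas ((4*(m-k)+2)+4)) - S m := by
    rw [S, Finset.mul_sum, ← Finset.sum_sub_distrib]
    apply Finset.sum_congr rfl
    intro k hk
    rw [lucas8]
    ring
  have hf1 : (Nat.fib (2*m+4) : ℤ) = Nat.fib (2*m+3) + Nat.fib (2*m+2) := by
    have := Nat.fib_add_two (n := 2*m+2)
    push_cast [this]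
    ring_nf
  rw [hB, hC, hA, hf1]
  ring

lemma fibstep (j : ℕ) : (Nat.fib (j+4) : ℤ) = 3 * Nat.fib (j+2) - Nat.fib j := by
  have h1 := Nat.fib_add_two (n := j)
  have h2 := Nat.fib_add_two (n := j+1)
  have h3 := Nat.fib_add_two (n := j+2)
  have e2 : j+1+2 = j+3 := rfl
  have e3 : j+2+2 = j+4 := rfl
  rw [e2] at h2; rw [e3] at h3
  push_cast [h3, h2, h1]
  ring

lemma key : ∀ m : ℕ, 4 * S m = (lucas (4*m+2) : ℤ) - 3 * Nat.fib (2*m+1) := by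
  have base0 : 4 * S 0 = (lucas 2 : ℤ) - 3 * Nat.fib 1 := by
    simp [S]
    rfl
  have base1 : 4 * S 1 = (lucas 6 : ℤ) - 3 * Nat.fib 3 := by
    simp [S]
    rfl
  intro m
  induction m using Nat.strong_induction_on with
  | _ m ih =>
    match m with
    | 0 => exact base0
    | 1 => exact base1
    | (j+2) =>
      have h1 := ih j (by omega)
      have h2 := ih (j+1) (by omega)
      have hs := Sstep j
      have hl := lucas8 (4*j+2)
      have hf := fibstep (2*j+1)
      have e1 : 4*(j+2)+2 = (4*j+2)+8 := by ring
      have e2 : 4*(j+1)+2 = (4*j+2)+4 := by ring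
      have e3 : 2*(j+2)+1 = (2*j+1)+4 := by ring
      have e4 : 2*(j+1)+1 = (2*j+1)+2 := by ring
      have e5 : 2*j+3 = (2*j+1)+2 := by ring
      rw [e1, e3, hl, hf]
      rw [e2, e4] at h2
      rw [e5] at hs
      linarith

theorem stmt13 (n : ℕ) (hn : 1 ≤ n) :
    3 * (Nat.fib (2 * n - 1) : ℤ) =
      (lucas (4 * n - 2) : ℤ) -
        4 * ∑ k ∈ Finset.Icc 1 (n - 1), (Nat.fib (2 * k) : ℤ) * (lucas (4 * n - 4 * k - 2) : ℤ) := by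
  obtain ⟨m, rfl⟩ : ∃ m, n = m + 1 := ⟨n - 1, by omega⟩
  have hk := key m
  have e1 : 2*(m+1)-1 = 2*m+1 := by omega
  have e2 : 4*(m+1)-2 = 4*m+2 := by omega
  have e3 : m+1-1 = m := by omega
  rw [e1, e2, e3]
  have hsum : ∑ k ∈ Finset.Icc 1 m, (Nat.fib (2*k) : ℤ) * (lucas (4*(m+1)-4*k-2) : ℤ) = S m := by
    rw [S]
    apply Finset.sum_congr rfl
    intro k hk
    simp only [Finset.mem_Icc] at hk
    have e : 4*(m+1)-4*k-2 = 4*(m-k)+2 := by omega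
    rw [e]
  rw [hsum]
  linarith
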